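/- Let 𝔪_t = Σ_{i=0}^N t^i m_i be an order-N deformation of a hom-Lie-Rinehart structure 𝔪. The obstruction cochain Θ := −(1/2) Σ_{i+j=N+1, i,j>0} [m_i, m_j] is a 3-cocycle in the deformation complex: δ(Θ) = 0. -/
import Mathlib


open scoped BigOperators

section Framework

variable (R : Type*) [CommRing R] (A : Type*) [CommRing A] [Algebra R A]
variable (M : Type*) [AddCommGroup M] [Module R M] [Module A M] [IsScalarTower R A M]

/-- A `(φ,β)`-multiderivation of degree `n` of the `A`-module `M`, with symbol `σ`. -/
structure IsMultiDer (φ : A →ₐ[R] A) (β : M → M) (n : ℕ)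
    (D : (Fin (n + 1) → M) → M) (σ : (Fin n → M) → A → A) : Prop where
  D_add : ∀ (x : Fin (n + 1) → M) (i : Fin (n + 1)) (u v : M),
    D (Function.update x i (u + v)) = D (Function.update x i u) + D (Function.update x i v)
  D_smul : ∀ (x : Fin (n + 1) → M) (i : Fin (n + 1)) (r : R) (u : M),
    D (Function.update x i (r • u)) = r • D (Function.update x i u)
  D_alt : ∀ (x : Fin (n + 1) → M) (i j : Fin (n + 1)), i ≠ j → x i = x j → D x = 0
  σ_add : ∀ (x : Fin n → M) (i : Fin n) (u v : M),
    σ (Function.update x i (u + v)) = σ (Function.update x i u) + σ (Function.update x i v)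
  σ_smul : ∀ (x : Fin n → M) (i : Fin n) (r : R) (u : M),
    σ (Function.update x i (r • u)) = r • σ (Function.update x i u)
  σ_alt : ∀ (x : Fin n → M) (i j : Fin n), i ≠ j → x i = x j → σ x = 0
  σ_linear : ∀ x : Fin n → M, IsLinearMap R (σ x)
  σ_der : ∀ (x : Fin n → M) (a b : A),
    σ x (a * b) = (⇑φ)^[n] a * σ x b + (⇑φ)^[n] b * σ x a
  D_beta : ∀ x : Fin (n + 1) → M, D (fun i => β (x i)) = β (D x)
  σ_beta : ∀ (x : Fin n → M) (a : A), σ (fun i => β (x i)) (φ a) = φ (σ x a)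
  σ_A : ∀ (x : Fin n → M) (i : Fin n) (a : A),
    σ (Function.update x i (a • x i)) = fun b => (⇑φ)^[n] a * σ x b
  D_leibniz : ∀ (x : Fin (n + 1) → M) (a : A),
    D (Function.update x (Fin.last n) (a • x (Fin.last n)))
      = (⇑φ)^[n] a • D x + σ (fun i : Fin n => x i.castSucc) a • (β^[n] (x (Fin.last n)))

variable {M}

/-- `(q+1,p)`-shuffles: permutations strictly increasing on the first `k` positions
and on the remaining ones. -/
def IsShuffle (k : ℕ) {n : ℕ} (τ : Equiv.Perm (Fin n)) : Prop :=
  (∀ i j : Fin n, i < j → (j : ℕ) < k → τ i < τ j) ∧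
  (∀ i j : Fin n, i < j → k ≤ (i : ℕ) → τ i < τ j)

instance (k n : ℕ) : DecidablePred (fun τ : Equiv.Perm (Fin n) => IsShuffle k τ) := fun τ =>
  inferInstanceAs (Decidable (_ ∧ _))

/-- Shuffle composition `D₁ ∘ D₂` of multiderivations of degrees `p` and `q`. -/
def compFun (β : M → M) (p q : ℕ) (D1 : (Fin (p + 1) → M) → M) (D2 : (Fin (q + 1) → M) → M)
    (x : Fin (p + q + 1) → M) : M :=
  ∑ τ ∈ Finset.univ.filter (fun τ : Equiv.Perm (Fin (p + q + 1)) => IsShuffle (q + 1) τ),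
    (Equiv.Perm.sign τ : ℤ) •
      D1 (Fin.cons (D2 (fun i : Fin (q + 1) => x (τ (Fin.castLE (by omega) i))))
        (fun j : Fin p => β^[q] (x (τ (Fin.cast (by omega) (Fin.natAdd (q + 1) j))))))

/-- The graded Lie bracket `[D₁,D₂] = (-1)^{pq} D₁∘D₂ - D₂∘D₁`. -/
def bracketFun (β : M → M) (p q : ℕ) (D1 : (Fin (p + 1) → M) → M)
    (D2 : (Fin (q + 1) → M) → M) (x : Fin (p + q + 1) → M) : M :=
  ((-1 : ℤ)) ^ (p * q) • compFun β p q D1 D2 x -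
    compFun β q p D2 D1 (fun i => x (Fin.cast (by omega) i))

variable {A}

/-- The operation `σ₁ ⊙ D₂` on symbols. -/
def odotFun (φ : A → A) (β : M → M) :
    (p : ℕ) → (q : ℕ) → ((Fin p → M) → A → A) → ((Fin (q + 1) → M) → M) →
      (Fin (p + q) → M) → A → A
  | 0, _, _, _, _, _ => 0
  | (p' + 1), q, σ1, D2, x, a =>
    ∑ τ ∈ Finset.univ.filter (fun τ : Equiv.Perm (Fin (p' + 1 + q)) => IsShuffle (q + 1) τ),
      (Equiv.Perm.sign τ : ℤ) •
        σ1 (Fin.cons (D2 (fun i : Fin (q + 1) => x (τ (Fin.castLE (by omega) i))))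
            (fun j : Fin p' => β^[q] (x (τ (Fin.cast (by omega) (Fin.natAdd (q + 1) j))))))
          (φ^[q] a)

/-- The bracket `{σ₁, σ₂}` of symbols. -/
def symBrFun (β : M → M) (p q : ℕ) (σ1 : (Fin p → M) → A → A) (σ2 : (Fin q → M) → A → A)
    (x : Fin (p + q) → M) (a : A) : A :=
  ∑ τ ∈ Finset.univ.filter (fun τ : Equiv.Perm (Fin (p + q)) => IsShuffle p τ),
    (Equiv.Perm.sign τ : ℤ) •
      (σ1 (fun i : Fin p => β^[q] (x (τ (Fin.castLE (by omega) i))))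
          (σ2 (fun j : Fin q => x (τ (Fin.cast (by omega) (Fin.natAdd p j)))) a)
        - σ2 (fun j : Fin q => β^[p] (x (τ (Fin.cast (by omega) (Fin.natAdd p j)))))
          (σ1 (fun i : Fin p => x (τ (Fin.castLE (by omega) i))) a))

end Framework


namespace ObsAux
variable {L : Type*} [AddCommGroup L]
variable (α : L → L) (m : ℕ → (Fin 2 → L) → L)

/-- 3-ary shuffle composition `m_p ∘ m_q` (element level). -/
def c3 (p q : ℕ) (u v w : L) : L :=
  m p ![m q ![u, v], α w] - m p ![m q ![u, w], α v] + m p ![m q ![v, w], α u]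

/-- `m_p ∘ (m_q ∘ m_r)` (element level, 4-ary). -/
def T1 (p q r : ℕ) (a b c d : L) : L :=
  m p ![c3 α m q r a b c, α (α d)] - m p ![c3 α m q r a b d, α (α c)]
    + m p ![c3 α m q r a c d, α (α b)] - m p ![c3 α m q r b c d, α (α a)]

/-- `(m_p ∘ m_q) ∘ m_r` (element level, 4-ary). -/
def T2 (p q r : ℕ) (a b c d : L) : L :=
  c3 α m p q (m r ![a, b]) (α c) (α d) - c3 α m p q (m r ![a, c]) (α b) (α d)
    + c3 α m p q (m r ![a, d]) (α b) (α c) + c3 α m p q (m r ![b, c]) (α a) (α d)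
    - c3 α m p q (m r ![b, d]) (α a) (α c) + c3 α m p q (m r ![c, d]) (α a) (α b)

/-- The associator-defect `A(m_p; m_q, m_r)`. -/
def Aat (p q r : ℕ) (a b c d : L) : L :=
  m p ![α (m q ![c, d]), α (m r ![a, b])] - m p ![α (m q ![b, d]), α (m r ![a, c])]
    + m p ![α (m q ![b, c]), α (m r ![a, d])] + m p ![α (m q ![a, d]), α (m r ![b, c])]
    - m p ![α (m q ![a, c]), α (m r ![b, d])] + m p ![α (m q ![a, b]), α (m r ![c, d])]

/-- left-slot additive hom -/
def lh (hadd0 : ∀ (k : ℕ) (u v w : L), m k ![u + v, w] = m k ![u, w] + m k ![v, w])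
    (k : ℕ) (w : L) : L →+ L :=
  AddMonoidHom.mk' (fun u => m k ![u, w]) (fun u v => hadd0 k u v w)

section Lemmas
variable (hadd0 : ∀ (k : ℕ) (u v w : L), m k ![u + v, w] = m k ![u, w] + m k ![v, w])
variable (hskew : ∀ (k : ℕ) (u v : L), m k ![u, v] = - m k ![v, u])
variable (halpha : ∀ (k : ℕ) (u v : L), m k ![α u, α v] = α (m k ![u, v]))

include hadd0 in
lemma hz0 (k : ℕ) (w : L) : m k ![(0 : L), w] = 0 := (lh m hadd0 k w).map_zero

include hadd0 in
lemma hn0 (k : ℕ) (u w : L) : m k ![-u, w] = - m k ![u, w] := (lh m hadd0 k w).map_neg u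

include hadd0 in
lemma hsplit (k : ℕ) (x y z w : L) :
    m k ![x - y + z, w] = m k ![x, w] - m k ![y, w] + m k ![z, w] := by
  have h1 := (lh m hadd0 k w).map_sub x y
  have h2 := hadd0 k (x - y) z w
  rw [h2]; rw [show (lh m hadd0 k w) (x - y) = m k ![x - y, w] from rfl,
    show (lh m hadd0 k w) x = m k ![x, w] from rfl,
    show (lh m hadd0 k w) y = m k ![y, w] from rfl] at h1
  rw [h1]

include hadd0 in
lemma hsum0 {ι : Type*} (k : ℕ) (w : L) (s : Finset ι) (f : ι → L) :
    m k ![∑ t ∈ s, f t, w] = ∑ t ∈ s, m k ![f t, w] := by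
  exact map_sum (lh m hadd0 k w) f s

set_option maxHeartbeats 1000000 in
include hadd0 halpha in
/-- K1: right-symmetry defect. -/
lemma key1 (p q r : ℕ) (a b c d : L) :
    T2 α m p q r a b c d = T1 α m p q r a b c d + Aat α m p q r a b c d := by
  simp only [T1, T2, Aat, c3, hsplit m hadd0, halpha]
  abel

include hskew in
/-- K2: antisymmetry of the defect in the last two slots. -/
lemma key2 (p q r : ℕ) (a b c d : L) :
    Aat α m p q r a b c d + Aat α m p r q a b c d = 0 := by
  simp only [Aat]
  rw [hskew p (α (m r ![c, d])) (α (m q ![a, b])),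
    hskew p (α (m r ![b, d])) (α (m q ![a, c])),
    hskew p (α (m r ![b, c])) (α (m q ![a, d])),
    hskew p (α (m r ![a, d])) (α (m q ![b, c])),
    hskew p (α (m r ![a, c])) (α (m q ![b, d])),
    hskew p (α (m r ![a, b])) (α (m q ![c, d]))]
  abel

include hskew in
lemma key2' (p q : ℕ) (a b c d : L) : Aat α m p q q a b c d = 0 := by
  simp only [Aat]
  rw [hskew p (α (m q ![c, d])) (α (m q ![a, b])),
    hskew p (α (m q ![b, d])) (α (m q ![a, c])),
    hskew p (α (m q ![b, c])) (α (m q ![a, d]))]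
  abel


variable (N' : ℕ)

include hadd0 in
lemma hT1sum (p n : ℕ) (hn : n ≤ N') (hc3 : ∀ n ≤ N', ∀ u v w : L,
      ∑ k ∈ Finset.range (n + 1), c3 α m k (n - k) u v w = 0)
    (a b c d : L) :
    ∑ q ∈ Finset.range (n + 1), T1 α m p q (n - q) a b c d = 0 := by
  simp only [T1]
  rw [Finset.sum_sub_distrib, Finset.sum_add_distrib, Finset.sum_sub_distrib,
    ← hsum0 m hadd0, ← hsum0 m hadd0, ← hsum0 m hadd0, ← hsum0 m hadd0,
    hc3 n hn, hc3 n hn, hc3 n hn, hc3 n hn, hz0 m hadd0, hz0 m hadd0,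
    hz0 m hadd0, hz0 m hadd0]
  abel

lemma hT2sum (r n : ℕ) (hn : n ≤ N') (hc3 : ∀ n ≤ N', ∀ u v w : L,
      ∑ k ∈ Finset.range (n + 1), c3 α m k (n - k) u v w = 0)
    (a b c d : L) :
    ∑ p ∈ Finset.range (n + 1), T2 α m p (n - p) r a b c d = 0 := by
  simp only [T2]
  rw [Finset.sum_add_distrib, Finset.sum_sub_distrib, Finset.sum_add_distrib,
    Finset.sum_add_distrib, Finset.sum_sub_distrib,
    hc3 n hn, hc3 n hn, hc3 n hn, hc3 n hn, hc3 n hn, hc3 n hn]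
  abel


set_option maxHeartbeats 1000000 in
include hadd0 hskew halpha in
lemma master (hc3 : ∀ n ≤ N', ∀ u v w : L,
      ∑ k ∈ Finset.range (n + 1), c3 α m k (n - k) u v w = 0) (a b c d : L) :
    ∑ i ∈ Finset.Ico 1 (N' + 1),
      (T2 α m i (N' + 1 - i) 0 a b c d - T1 α m 0 i (N' + 1 - i) a b c d) = 0 := by
  have step : ∀ i ∈ Finset.Ico 1 (N' + 1),
      T2 α m i (N' + 1 - i) 0 a b c d - T1 α m 0 i (N' + 1 - i) a b c d
        = (∑ p ∈ Finset.Ico 1 i, T2 α m p (i - p) (N' + 1 - i) a b c d)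
          - (∑ q ∈ Finset.Ico 1 (N' + 1 - i), T1 α m i q (N' + 1 - i - q) a b c d)
          + Aat α m 0 i (N' + 1 - i) a b c d := by
    intro i hi
    simp only [Finset.mem_Ico] at hi
    obtain ⟨h1, h2⟩ := hi
    set j := N' + 1 - i with hj
    have hjN : j ≤ N' := by omega
    have e1 : T1 α m i j 0 a b c d
        = -(T1 α m i 0 j a b c d + ∑ q ∈ Finset.Ico 1 j, T1 α m i q (j - q) a b c d) := by
      have h := hT1sum α m hadd0 N' i j hjN hc3 a b c d
      rw [Finset.sum_range_succ, Nat.sub_self, Finset.range_eq_Ico,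
        Finset.sum_eq_sum_Ico_succ_bot (by omega : (0:ℕ) < j), Nat.sub_zero] at h
      have := eq_neg_of_add_eq_zero_right h
      rw [this]
    have e2 : T2 α m i 0 j a b c d
        = -(T2 α m 0 i j a b c d + ∑ p ∈ Finset.Ico 1 i, T2 α m p (i - p) j a b c d) := by
      have h := hT2sum α m N' j i (by omega : i ≤ N') hc3 a b c d
      rw [Finset.sum_range_succ, Nat.sub_self, Finset.range_eq_Ico,
        Finset.sum_eq_sum_Ico_succ_bot (by omega : (0:ℕ) < i), Nat.sub_zero] at h
      have := eq_neg_of_add_eq_zero_right h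
      rw [this]
    have k1a : T2 α m i j 0 a b c d = T1 α m i j 0 a b c d + Aat α m i j 0 a b c d :=
      key1 α m hadd0 halpha i j 0 a b c d
    have k1b : T1 α m 0 i j a b c d = T2 α m 0 i j a b c d - Aat α m 0 i j a b c d := by
      rw [key1 α m hadd0 halpha 0 i j a b c d]; abel
    have k1c : T1 α m i 0 j a b c d = T2 α m i 0 j a b c d - Aat α m i 0 j a b c d := by
      rw [key1 α m hadd0 halpha i 0 j a b c d]; abel
    have k2 : Aat α m i j 0 a b c d = - Aat α m i 0 j a b c d := by
      have h := key2 α m hskew i 0 j a b c d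
      have := eq_neg_of_add_eq_zero_right h
      rw [this]
    rw [k1a, k1b, e1, k1c, e2, k2]
    abel
  rw [Finset.sum_congr rfl step, Finset.sum_add_distrib, Finset.sum_sub_distrib]
  have hSC : ∑ i ∈ Finset.Ico 1 (N' + 1), Aat α m 0 i (N' + 1 - i) a b c d = 0 := by
    apply Finset.sum_involution (g := fun i _ => N' + 1 - i)
    · intro i hi
      simp only [Finset.mem_Ico] at hi
      rw [show N' + 1 - (N' + 1 - i) = i from by omega]
      exact key2 α m hskew 0 i (N' + 1 - i) a b c d
    · intro i hi hne hgi
      exact hne (by rw [hgi]; exact key2' α m hskew 0 i a b c d)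
    · intro i hi
      simp only [Finset.mem_Ico] at hi ⊢
      omega
    · intro i hi
      simp only [Finset.mem_Ico] at hi
      omega
  have hSA : ∑ i ∈ Finset.Ico 1 (N' + 1), ∑ p ∈ Finset.Ico 1 i,
        T2 α m p (i - p) (N' + 1 - i) a b c d
      = ∑ i ∈ Finset.Ico 1 (N' + 1), ∑ q ∈ Finset.Ico 1 (N' + 1 - i),
        T2 α m i q (N' + 1 - i - q) a b c d := by
    rw [Finset.sum_sigma', Finset.sum_sigma']
    refine Finset.sum_nbij' (fun z => ⟨z.2, z.1 - z.2⟩) (fun z => ⟨z.1 + z.2, z.1⟩)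
      ?_ ?_ ?_ ?_ ?_
    · rintro ⟨i, p⟩ h
      simp only [Finset.mem_sigma, Finset.mem_Ico] at h ⊢
      omega
    · rintro ⟨i, q⟩ h
      simp only [Finset.mem_sigma, Finset.mem_Ico] at h ⊢
      omega
    · rintro ⟨i, p⟩ h
      simp only [Finset.mem_sigma, Finset.mem_Ico] at h
      show (⟨p + (i - p), p⟩ : (_ : ℕ) × ℕ) = ⟨i, p⟩
      rw [show p + (i - p) = i from by omega]
    · rintro ⟨i, q⟩ h
      simp only [Finset.mem_sigma, Finset.mem_Ico] at h
      show (⟨i, i + q - i⟩ : (_ : ℕ) × ℕ) = ⟨i, q⟩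
      rw [show i + q - i = q from by omega]
    · rintro ⟨i, p⟩ h
      simp only [Finset.mem_sigma, Finset.mem_Ico] at h
      rw [show N' + 1 - p - (i - p) = N' + 1 - i from by omega]
  rw [hSC, add_zero, hSA, ← Finset.sum_sub_distrib]
  have inner0 : ∀ i ∈ Finset.Ico 1 (N' + 1),
      (∑ q ∈ Finset.Ico 1 (N' + 1 - i), T2 α m i q (N' + 1 - i - q) a b c d)
        - (∑ q ∈ Finset.Ico 1 (N' + 1 - i), T1 α m i q (N' + 1 - i - q) a b c d) = 0 := by
    intro i hi
    simp only [Finset.mem_Ico] at hi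
    rw [← Finset.sum_sub_distrib]
    have hA : ∀ q ∈ Finset.Ico 1 (N' + 1 - i),
        T2 α m i q (N' + 1 - i - q) a b c d - T1 α m i q (N' + 1 - i - q) a b c d
          = Aat α m i q (N' + 1 - i - q) a b c d := by
      intro q hq
      rw [key1 α m hadd0 halpha i q (N' + 1 - i - q) a b c d]
      abel
    rw [Finset.sum_congr rfl hA]
    apply Finset.sum_involution (g := fun q _ => N' + 1 - i - q)
    · intro q hq
      simp only [Finset.mem_Ico] at hq
      rw [show N' + 1 - i - (N' + 1 - i - q) = q from by omega]
      exact key2 α m hskew i q (N' + 1 - i - q) a b c d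
    · intro q hq hne hgq
      exact hne (by rw [hgq]; exact key2' α m hskew i q a b c d)
    · intro q hq
      simp only [Finset.mem_Ico] at hq ⊢
      omega
    · intro q hq
      simp only [Finset.mem_Ico] at hq
      omega
  rw [Finset.sum_congr rfl inner0, Finset.sum_const_zero]

end Lemmas

def rh (hadd1 : ∀ (k : ℕ) (u v w : L), m k ![u, v + w] = m k ![u, v] + m k ![u, w])
    (k : ℕ) (u : L) : L →+ L :=
  AddMonoidHom.mk' (fun v => m k ![u, v]) (fun v w => hadd1 k u v w)

section Lemmas2
variable (hadd1 : ∀ (k : ℕ) (u v w : L), m k ![u, v + w] = m k ![u, v] + m k ![u, w])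
variable (hskew : ∀ (k : ℕ) (u v : L), m k ![u, v] = - m k ![v, u])

include hadd1 in
lemma hn1 (k : ℕ) (u v : L) : m k ![u, -v] = - m k ![u, v] := (rh m hadd1 k u).map_neg v

include hadd1 hskew in
lemma Jc3 (p q : ℕ) (u v w : L) :
    m p ![α u, m q ![v, w]] + m p ![α v, m q ![w, u]] + m p ![α w, m q ![u, v]]
      = - c3 α m p q u v w := by
  rw [c3, hskew q w u, hn1 m hadd1 p (α v) (m q ![u, w]),
    hskew p (α u) (m q ![v, w]), hskew p (α v) (m q ![u, w]), hskew p (α w) (m q ![u, v])]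
  abel

include hadd1 hskew in
lemma hc3_of_def (N : ℕ)
    (hdef : ∀ n ≤ N, ∀ (x y z : L),
      ∑ i ∈ Finset.range (n + 1),
        (m i ![α x, m (n - i) ![y, z]] + m i ![α y, m (n - i) ![z, x]]
          + m i ![α z, m (n - i) ![x, y]]) = 0) :
    ∀ n ≤ N, ∀ u v w : L,
      ∑ k ∈ Finset.range (n + 1), c3 α m k (n - k) u v w = 0 := by
  intro n hn u v w
  have h := hdef n hn u v w
  rw [Finset.sum_congr rfl (fun k _ => Jc3 α m hadd1 hskew k (n - k) u v w)] at h
  rw [Finset.sum_neg_distrib] at h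
  exact neg_eq_zero.mp h

end Lemmas2
end ObsAux


namespace ObsComp
open Equiv
variable {L : Type*} [AddCommGroup L]

def pm (f g : Fin 4 → Fin 4) (h1 : ∀ i, g (f i) = i := by decide) (h2 : ∀ i, f (g i) = i := by decide) : Equiv.Perm (Fin 4) := ⟨f, g, h1, h2⟩

def s0 : Perm (Fin 4) := pm ![0,1,2,3] ![0,1,2,3]
def s1 : Perm (Fin 4) := pm ![0,1,3,2] ![0,1,3,2]
def s2 : Perm (Fin 4) := pm ![0,2,3,1] ![0,3,1,2]
def s3 : Perm (Fin 4) := pm ![1,2,3,0] ![3,0,1,2]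

example : (Equiv.Perm.sign s1 : ℤ) = -1 := by decide

lemma comp12 (β : L → L) (D : (Fin 2 → L) → L) (C : (Fin 3 → L) → L) (x : Fin 4 → L) :
    compFun β 1 2 D C x =
      D ![C ![x 0, x 1, x 2], β (β (x 3))] - D ![C ![x 0, x 1, x 3], β (β (x 2))]
        + D ![C ![x 0, x 2, x 3], β (β (x 1))] - D ![C ![x 1, x 2, x 3], β (β (x 0))] := by
  have hC : ∀ (τ : Equiv.Perm (Fin 4)),
      (fun i : Fin 3 => x (τ (Fin.castLE (by omega) i))) = ![x (τ 0), x (τ 1), x (τ 2)] := by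
    intro τ; funext i; fin_cases i <;> rfl
  have hD : ∀ (τ : Equiv.Perm (Fin 4)) (u : L),
      (Fin.cons u (fun j : Fin 1 => β^[2] (x (τ (Fin.cast (by omega) (Fin.natAdd 3 j))))) : Fin 2 → L)
        = ![u, β (β (x (τ 3)))] := by
    intro τ u; funext i
    refine Fin.cases rfl (fun j => ?_) i
    fin_cases j; rfl
  have hfil : (Finset.univ.filter (fun τ : Equiv.Perm (Fin 4) => IsShuffle 3 τ)) = {s0, s1, s2, s3} := by decide
  rw [compFun]
  rw [show (Finset.univ.filter (fun τ : Equiv.Perm (Fin (1+2+1)) => IsShuffle (2+1) τ)) = {s0, s1, s2, s3} from hfil]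
  rw [Finset.sum_insert (by decide), Finset.sum_insert (by decide), Finset.sum_insert (by decide),
    Finset.sum_singleton]
  rw [hC s0, hC s1, hC s2, hC s3, hD s0, hD s1, hD s2, hD s3]
  rw [show (Equiv.Perm.sign s0 : ℤ) = 1 from by decide, show (Equiv.Perm.sign s1 : ℤ) = -1 from by decide,
    show (Equiv.Perm.sign s2 : ℤ) = 1 from by decide, show (Equiv.Perm.sign s3 : ℤ) = -1 from by decide]
  rw [show s0 (0:Fin 4) = 0 from rfl, show s0 (1:Fin 4) = 1 from rfl, show s0 (2:Fin 4) = 2 from rfl,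
    show s0 (3:Fin 4) = 3 from rfl,
    show s1 (0:Fin 4) = 0 from rfl, show s1 (1:Fin 4) = 1 from rfl, show s1 (2:Fin 4) = 3 from rfl,
    show s1 (3:Fin 4) = 2 from rfl,
    show s2 (0:Fin 4) = 0 from rfl, show s2 (1:Fin 4) = 2 from rfl, show s2 (2:Fin 4) = 3 from rfl,
    show s2 (3:Fin 4) = 1 from rfl,
    show s3 (0:Fin 4) = 1 from rfl, show s3 (1:Fin 4) = 2 from rfl, show s3 (2:Fin 4) = 3 from rfl,
    show s3 (3:Fin 4) = 0 from rfl]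
  rw [one_smul, one_smul, neg_one_zsmul, neg_one_zsmul]
  abel


def u0 : Perm (Fin 4) := pm ![0,1,2,3] ![0,1,2,3]
def u1 : Perm (Fin 4) := pm ![0,2,1,3] ![0,2,1,3]
def u2 : Perm (Fin 4) := pm ![0,3,1,2] ![0,2,3,1]
def u3 : Perm (Fin 4) := pm ![1,2,0,3] ![2,0,1,3]
def u4 : Perm (Fin 4) := pm ![1,3,0,2] ![2,0,3,1]
def u5 : Perm (Fin 4) := pm ![2,3,0,1] ![2,3,0,1]

lemma comp21 (β : L → L) (C : (Fin 3 → L) → L) (D : (Fin 2 → L) → L) (x : Fin 4 → L) :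
    compFun β 2 1 C D x =
      C ![D ![x 0, x 1], β (x 2), β (x 3)] - C ![D ![x 0, x 2], β (x 1), β (x 3)]
        + C ![D ![x 0, x 3], β (x 1), β (x 2)] + C ![D ![x 1, x 2], β (x 0), β (x 3)]
        - C ![D ![x 1, x 3], β (x 0), β (x 2)] + C ![D ![x 2, x 3], β (x 0), β (x 1)] := by
  have hD : ∀ (τ : Equiv.Perm (Fin 4)),
      (fun i : Fin 2 => x (τ (Fin.castLE (by omega) i))) = ![x (τ 0), x (τ 1)] := by
    intro τ; funext i; fin_cases i <;> rfl
  have hC : ∀ (τ : Equiv.Perm (Fin 4)) (u : L),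
      (Fin.cons u (fun j : Fin 2 => β^[1] (x (τ (Fin.cast (by omega) (Fin.natAdd 2 j))))) : Fin 3 → L)
        = ![u, β (x (τ 2)), β (x (τ 3))] := by
    intro τ u; funext i
    refine Fin.cases rfl (fun j => ?_) i
    fin_cases j <;> rfl
  have hfil : (Finset.univ.filter (fun τ : Equiv.Perm (Fin 4) => IsShuffle 2 τ))
      = {u0, u1, u2, u3, u4, u5} := by decide
  rw [compFun]
  rw [show (Finset.univ.filter (fun τ : Equiv.Perm (Fin (2+1+1)) => IsShuffle (1+1) τ))
      = {u0, u1, u2, u3, u4, u5} from hfil]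
  rw [Finset.sum_insert (by decide), Finset.sum_insert (by decide), Finset.sum_insert (by decide),
    Finset.sum_insert (by decide), Finset.sum_insert (by decide), Finset.sum_singleton]
  rw [hD u0, hD u1, hD u2, hD u3, hD u4, hD u5, hC u0, hC u1, hC u2, hC u3, hC u4, hC u5]
  rw [show (Equiv.Perm.sign u0 : ℤ) = 1 from by decide, show (Equiv.Perm.sign u1 : ℤ) = -1 from by decide,
    show (Equiv.Perm.sign u2 : ℤ) = 1 from by decide, show (Equiv.Perm.sign u3 : ℤ) = 1 from by decide,
    show (Equiv.Perm.sign u4 : ℤ) = -1 from by decide, show (Equiv.Perm.sign u5 : ℤ) = 1 from by decide]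
  rw [show u0 (0:Fin 4) = 0 from rfl, show u0 (1:Fin 4) = 1 from rfl, show u0 (2:Fin 4) = 2 from rfl,
    show u0 (3:Fin 4) = 3 from rfl,
    show u1 (0:Fin 4) = 0 from rfl, show u1 (1:Fin 4) = 2 from rfl, show u1 (2:Fin 4) = 1 from rfl,
    show u1 (3:Fin 4) = 3 from rfl,
    show u2 (0:Fin 4) = 0 from rfl, show u2 (1:Fin 4) = 3 from rfl, show u2 (2:Fin 4) = 1 from rfl,
    show u2 (3:Fin 4) = 2 from rfl,
    show u3 (0:Fin 4) = 1 from rfl, show u3 (1:Fin 4) = 2 from rfl, show u3 (2:Fin 4) = 0 from rfl,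
    show u3 (3:Fin 4) = 3 from rfl,
    show u4 (0:Fin 4) = 1 from rfl, show u4 (1:Fin 4) = 3 from rfl, show u4 (2:Fin 4) = 0 from rfl,
    show u4 (3:Fin 4) = 2 from rfl,
    show u5 (0:Fin 4) = 2 from rfl, show u5 (1:Fin 4) = 3 from rfl, show u5 (2:Fin 4) = 0 from rfl,
    show u5 (3:Fin 4) = 1 from rfl]
  rw [one_smul, one_smul, one_smul, one_smul, neg_one_zsmul, neg_one_zsmul]
  abel

end ObsComp

/-- for an order-`N` deformation `𝔪_t = Σ_{i=0}^N tⁱ mᵢ` of a hom-Lie-Rinehart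
structure `𝔪 = m₀`, the obstruction cochain
`Θ(a,b,c) = Σ_{i+j=N+1, i,j>0} (mᵢ(α a, mⱼ(b,c)) + mᵢ(α b, mⱼ(c,a)) + mᵢ(α c, mⱼ(a,b)))`
(`= -(1/2) Σ [mᵢ,mⱼ]`) is a 3-cocycle of the deformation complex: `δ(Θ) = [𝔪, Θ] = 0`. -/

theorem obstruction_is_three_cocycle
    (R : Type*) [CommRing R] (A : Type*) [CommRing A] [Algebra R A]
    (L : Type*) [AddCommGroup L] [Module R L] [Module A L] [IsScalarTower R A L]
    (φ : A →ₐ[R] A) (α : L → L)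
    (N : ℕ) (m : ℕ → (Fin 2 → L) → L) (σs : ℕ → (Fin 1 → L) → A → A)
    (hmd : ∀ i, IsMultiDer R A L φ α 1 (m i) (σs i))
    (hdef : ∀ n ≤ N, ∀ (x y z : L),
      ∑ i ∈ Finset.range (n + 1),
        (m i ![α x, m (n - i) ![y, z]] + m i ![α y, m (n - i) ![z, x]]
          + m i ![α z, m (n - i) ![x, y]]) = 0) :
    ∀ x : Fin 4 → L,
      bracketFun α 1 2 (m 0)
        (fun y : Fin 3 → L =>
          ∑ i ∈ Finset.Ico 1 (N + 1),
            (m i ![α (y 0), m (N + 1 - i) ![y 1, y 2]]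
              + m i ![α (y 1), m (N + 1 - i) ![y 2, y 0]]
              + m i ![α (y 2), m (N + 1 - i) ![y 0, y 1]])) x = 0 := by
  have upd0 : ∀ (z b w : L), Function.update ![z, w] (0 : Fin 2) b = ![b, w] := by
    intro z b w; funext i; fin_cases i <;> simp [Function.update]
  have upd1 : ∀ (z u v : L), Function.update ![u, z] (1 : Fin 2) v = ![u, v] := by
    intro z u v; funext i; fin_cases i <;> simp [Function.update]
  have hadd0 : ∀ (k : ℕ) (u v w : L), m k ![u + v, w] = m k ![u, w] + m k ![v, w] := by
    intro k u v w
    have h := (hmd k).D_add ![u, w] 0 u v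
    rwa [upd0, upd0, upd0] at h
  have hadd1 : ∀ (k : ℕ) (u v w : L), m k ![u, v + w] = m k ![u, v] + m k ![u, w] := by
    intro k u v w
    have h := (hmd k).D_add ![u, v] 1 v w
    rwa [upd1, upd1, upd1] at h
  have halt : ∀ (k : ℕ) (u : L), m k ![u, u] = 0 := fun k u =>
    (hmd k).D_alt ![u, u] 0 1 (by decide) rfl
  have hskew : ∀ (k : ℕ) (u v : L), m k ![u, v] = - m k ![v, u] := by
    intro k u v
    have h := halt k (u + v)
    rw [hadd0 k u v (u + v), hadd1 k u u v, hadd1 k v u v, halt k u, halt k v,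
      zero_add, add_zero] at h
    exact eq_neg_of_add_eq_zero_left h
  have halpha : ∀ (k : ℕ) (u v : L), m k ![α u, α v] = α (m k ![u, v]) := by
    intro k u v
    have h := (hmd k).D_beta ![u, v]
    rwa [show (fun i => α (![u, v] i)) = ![α u, α v] from by funext i; fin_cases i <;> rfl] at h
  have hc3 := ObsAux.hc3_of_def α m hadd1 hskew N hdef
  intro x
  rw [bracketFun]
  rw [show ((-1 : ℤ)) ^ (1 * 2) = 1 from by norm_num, one_smul]
  rw [show (fun i : Fin (2 + 1 + 1) => x (Fin.cast (by omega) i)) = x from funext fun i => rfl]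
  rw [ObsComp.comp12 α (m 0) _ x, ObsComp.comp21 α _ (m 0) x]
  simp only [Matrix.cons_val_zero, Matrix.cons_val_one, Matrix.head_cons,
    Matrix.cons_val_two, Matrix.tail_cons]
  have hThsum : ∀ u v w : L,
      (∑ i ∈ Finset.Ico 1 (N + 1),
        (m i ![α u, m (N + 1 - i) ![v, w]] + m i ![α v, m (N + 1 - i) ![w, u]]
          + m i ![α w, m (N + 1 - i) ![u, v]]))
        = - ∑ i ∈ Finset.Ico 1 (N + 1), ObsAux.c3 α m i (N + 1 - i) u v w := by
    intro u v w
    rw [Finset.sum_congr rfl (fun i _ => ObsAux.Jc3 α m hadd1 hskew i (N + 1 - i) u v w),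
      Finset.sum_neg_distrib]
  rw [hThsum (x 0) (x 1) (x 2), hThsum (x 0) (x 1) (x 3), hThsum (x 0) (x 2) (x 3),
    hThsum (x 1) (x 2) (x 3),
    hThsum (m 0 ![x 0, x 1]) (α (x 2)) (α (x 3)), hThsum (m 0 ![x 0, x 2]) (α (x 1)) (α (x 3)),
    hThsum (m 0 ![x 0, x 3]) (α (x 1)) (α (x 2)), hThsum (m 0 ![x 1, x 2]) (α (x 0)) (α (x 3)),
    hThsum (m 0 ![x 1, x 3]) (α (x 0)) (α (x 2)), hThsum (m 0 ![x 2, x 3]) (α (x 0)) (α (x 1))]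
  simp only [ObsAux.hn0 m hadd0, ObsAux.hsum0 m hadd0]
  have hm := ObsAux.master α m hadd0 hskew halpha N hc3 (x 0) (x 1) (x 2) (x 3)
  rw [Finset.sum_sub_distrib] at hm
  simp only [ObsAux.T1, ObsAux.T2] at hm
  simp only [Finset.sum_sub_distrib, Finset.sum_add_distrib] at hm ⊢
  rw [← hm]
  abel
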